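/- Assume β ≠ 0 and λ = μ = ν = 0 (the shape operator of a ruled hypersurface). Then (RS − SR)X and (RS − SR)Y are not both scalar multiples of W. Hence no ruled hypersurface in CP² or CH² is pseudo-Ryan. -/

import Mathlib

open Matrix

/-- The wedge operator `(u ∧ v)w = ⟨v,w⟩u − ⟨u,w⟩v` as a 3×3 matrix. -/
def wedge3 (u v : Fin 3 → ℝ) : Matrix (Fin 3) (Fin 3) ℝ :=
  Matrix.vecMulVec u v - Matrix.vecMulVec v u

/-- for a ruled hypersurface (β ≠ 0, λ = μ = ν = 0), (RS − SR)X and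
(RS − SR)Y are not both scalar multiples of W; hence no ruled hypersurface in CP²
or CH² is pseudo-Ryan. -/
theorem ruled_not_pseudo_ryan
    (α β lam μ ν c : ℝ) (hc : c ≠ 0) (hβ : β ≠ 0)
    (hlam : lam = 0) (hμ : μ = 0) (hν : ν = 0)
    (W X Y : Fin 3 → ℝ)
    (hWdef : W = ![1, 0, 0]) (hXdef : X = ![0, 1, 0]) (hYdef : Y = ![0, 0, 1])
    (A φ S R : Matrix (Fin 3) (Fin 3) ℝ)
    (hA : A = !![α, β, 0; β, lam, μ; 0, μ, ν])
    (hφ : φ = !![0, 0, 0; 0, 0, -1; 0, 1, 0])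
    (hS : S = (5 * c) • (1 : Matrix (Fin 3) (Fin 3) ℝ) - (3 * c) • Matrix.vecMulVec W W
        + (α + lam + ν) • A - A * A)
    (hR : R = wedge3 (A.mulVec X) (A.mulVec Y)
        + c • (wedge3 X Y + wedge3 (φ.mulVec X) (φ.mulVec Y) + (2 * (X ⬝ᵥ φ.mulVec Y)) • φ)) :
    ¬ ((∃ t : ℝ, (R * S - S * R).mulVec X = t • W) ∧
       (∃ t : ℝ, (R * S - S * R).mulVec Y = t • W)) := by
  rintro ⟨⟨t, ht⟩, -⟩
  have h2 := congrFun ht 2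
  subst hlam hμ hν hWdef hXdef hYdef hA hφ hS hR
  simp [wedge3, Matrix.mulVec, Matrix.mul_apply, Matrix.vecMulVec, dotProduct,
    Fin.sum_univ_succ, Matrix.one_apply, Matrix.vecHead, Matrix.vecTail, Function.comp,
    Matrix.vecMul, Matrix.cons_val_zero, Matrix.cons_val_one] at h2
  have : (4 : ℝ) * β ^ 2 * c = 0 := by nlinarith [h2]
  have hβ2 : β ^ 2 ≠ 0 := pow_ne_zero 2 hβ
  exact mul_ne_zero (mul_ne_zero (by norm_num : (4:ℝ) ≠ 0) hβ2) hc this
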